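/- Let X be a reflexive real Banach space whose closed unit ball B_X equals the convex hull of its set of exposed points, and let Y be a real Banach space in which the only left symmetric point with respect to Birkhoff–James orthogonality is 0. Then the only compact bounded linear operator from X to Y that is a left symmetric point of K(X,Y) with respect to Birkhoff–James orthogonality is the zero operator. -/

import Mathlib

open Filter Topology Set Metric NormedSpace

noncomputable section

/-- Birkhoff–James orthogonality: `x ⊥_B y` iff `‖x + t • y‖ ≥ ‖x‖` for all real `t`. -/
def BJOrth {E : Type*} [NormedAddCommGroup E] [NormedSpace ℝ E] (x y : E) : Prop :=
  ∀ t : ℝ, ‖x‖ ≤ ‖x + t • y‖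

/-- The norm derivative `ρ'₊(x,y) = ‖x‖ · lim_{t→0⁺} (‖x+ty‖-‖x‖)/t`. -/
def rhoPlus {E : Type*} [NormedAddCommGroup E] [NormedSpace ℝ E] (x y : E) : ℝ :=
  ‖x‖ * limUnder (𝓝[>] (0 : ℝ)) (fun t => (‖x + t • y‖ - ‖x‖) / t)

/-- The norm derivative `ρ'₋(x,y) = ‖x‖ · lim_{t→0⁻} (‖x+ty‖-‖x‖)/t`. -/
def rhoMinus {E : Type*} [NormedAddCommGroup E] [NormedSpace ℝ E] (x y : E) : ℝ :=
  ‖x‖ * limUnder (𝓝[<] (0 : ℝ)) (fun t => (‖x + t • y‖ - ‖x‖) / t)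

/-- The norm derivative `ρ'(x,y) = (ρ'₊(x,y) + ρ'₋(x,y))/2`. -/
def rhoDer {E : Type*} [NormedAddCommGroup E] [NormedSpace ℝ E] (x y : E) : ℝ :=
  (rhoPlus x y + rhoMinus x y) / 2

/-- `x` is an exposed point of the closed unit ball of `E`: there is a norm-one functional `f`
with `f x = 1` and `f u < 1` for every `u` in the ball with `u ≠ x`. -/
def ExposedPt {E : Type*} [NormedAddCommGroup E] [NormedSpace ℝ E] (x : E) : Prop :=
  ‖x‖ ≤ 1 ∧ ∃ f : E →L[ℝ] ℝ, ‖f‖ = 1 ∧ f x = 1 ∧ ∀ u : E, ‖u‖ ≤ 1 → u ≠ x → f u < 1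

set_option maxHeartbeats 1000000

section Helpers

variable {X Y : Type*} [NormedAddCommGroup X] [NormedSpace ℝ X]
  [NormedAddCommGroup Y] [NormedSpace ℝ Y]

lemma myOpNorm_le_of_unit {A : X →L[ℝ] Y} {C : ℝ} (hC : 0 ≤ C)
    (h : ∀ w : X, ‖w‖ ≤ 1 → ‖A w‖ ≤ C) : ‖A‖ ≤ C := by
  refine A.opNorm_le_bound hC fun w => ?_
  rcases eq_or_ne w 0 with rfl | hw
  · simp
  · have hnw : 0 < ‖w‖ := norm_pos_iff.mpr hw
    have h1 : ‖(‖w‖⁻¹ • w : X)‖ ≤ 1 := by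
      rw [norm_smul, norm_inv, norm_norm, inv_mul_cancel₀ hnw.ne']
    have h2 := h _ h1
    rw [map_smul, norm_smul, norm_inv, norm_norm] at h2
    have := mul_le_mul_of_nonneg_left h2 hnw.le
    rw [← mul_assoc, mul_inv_cancel₀ hnw.ne', one_mul] at this
    linarith [mul_comm C ‖w‖ ▸ this]

/-- Ultrafilter weak limit in a reflexive space. -/
lemma exists_weak_limit (hrefl : Function.Surjective (inclusionInDoubleDual ℝ X))
    (U : Ultrafilter ℕ) (w : ℕ → X) (hw : ∀ n, ‖w n‖ ≤ 1) :
    ∃ w0 : X, ‖w0‖ ≤ 1 ∧ ∀ g : X →L[ℝ] ℝ, Tendsto (fun n => g (w n)) U (𝓝 (g w0)) := by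
  have hbdd : ∀ g : X →L[ℝ] ℝ, ∀ n, |g (w n)| ≤ ‖g‖ := by
    intro g n
    have h1 : ‖g (w n)‖ ≤ ‖g‖ * ‖w n‖ := g.le_opNorm _
    have h2 : ‖g‖ * ‖w n‖ ≤ ‖g‖ * 1 := by
      exact mul_le_mul_of_nonneg_left (hw n) (norm_nonneg g)
    rw [Real.norm_eq_abs] at h1
    linarith
  have hlim : ∀ g : X →L[ℝ] ℝ, ∃ c, Tendsto (fun n => g (w n)) U (𝓝 c) := by
    intro g
    have hle : (U.map fun n => g (w n) : Filter ℝ) ≤ 𝓟 (Icc (-‖g‖) ‖g‖) := by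
      rw [le_principal_iff]
      exact mem_map.mpr (univ_mem' fun n => abs_le.mp (hbdd g n))
    obtain ⟨c, _, hc⟩ := (isCompact_Icc (a := -‖g‖) (b := ‖g‖)).ultrafilter_le_nhds
      (U.map fun n => g (w n)) hle
    exact ⟨c, hc⟩
  choose φ hφ using hlim
  have hφ_bound : ∀ g : X →L[ℝ] ℝ, |φ g| ≤ ‖g‖ := fun g => by
    have h1 : Tendsto (fun n => |g (w n)|) U (𝓝 |φ g|) :=
      (continuous_abs.tendsto _).comp (hφ g)
    exact le_of_tendsto h1 (Eventually.of_forall fun n => hbdd g n)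
  have hadd : ∀ g1 g2 : X →L[ℝ] ℝ, φ (g1 + g2) = φ g1 + φ g2 := fun g1 g2 =>
    tendsto_nhds_unique (by simpa using hφ (g1 + g2)) ((hφ g1).add (hφ g2))
  have hsmul : ∀ (c : ℝ) (g : X →L[ℝ] ℝ), φ (c • g) = c * φ g := fun c g =>
    tendsto_nhds_unique (by simpa using hφ (c • g)) ((hφ g).const_mul c)
  let Φlin : (X →L[ℝ] ℝ) →ₗ[ℝ] ℝ :=
    { toFun := φ, map_add' := hadd, map_smul' := hsmul }
  let Φ : StrongDual ℝ (StrongDual ℝ X) := LinearMap.mkContinuous Φlin 1 (fun g => by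
    simpa [Φlin, Real.norm_eq_abs] using hφ_bound g)
  obtain ⟨w0, hw0⟩ := hrefl Φ
  have hval : ∀ g : X →L[ℝ] ℝ, g w0 = φ g := fun g => by
    have h1 := congrArg (fun F : StrongDual ℝ (StrongDual ℝ X) => F g) hw0
    simpa [NormedSpace.dual_def, Φ, Φlin, LinearMap.mkContinuous] using h1
  refine ⟨w0, ?_, fun g => by rw [hval g]; exact hφ g⟩
  refine norm_le_dual_bound ℝ w0 zero_le_one fun g => ?_
  rw [hval g, Real.norm_eq_abs, one_mul]
  exact hφ_bound g

lemma compact_limit (hrefl : Function.Surjective (inclusionInDoubleDual ℝ X))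
    {T : X →L[ℝ] Y} (hT : IsCompactOperator T)
    (U : Ultrafilter ℕ) (w : ℕ → X) (hw : ∀ n, ‖w n‖ ≤ 1) :
    ∃ w0 : X, ‖w0‖ ≤ 1 ∧ (∀ g : X →L[ℝ] ℝ, Tendsto (fun n => g (w n)) U (𝓝 (g w0))) ∧
      Tendsto (fun n => T (w n)) U (𝓝 (T w0)) := by
  obtain ⟨w0, hw01, hw0g⟩ := exists_weak_limit hrefl U w hw
  have hK : IsCompact (closure (T '' closedBall (0 : X) 1)) :=
    hT.isCompact_closure_image_closedBall (𝕜₁ := ℝ) 1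
  have hle : (U.map fun n => T (w n) : Filter Y) ≤ 𝓟 (closure (T '' closedBall (0 : X) 1)) := by
    rw [le_principal_iff]
    refine mem_map.mpr (univ_mem' fun n => subset_closure ?_)
    exact ⟨w n, by simpa [mem_closedBall_zero_iff] using hw n, rfl⟩
  obtain ⟨y, _, hy⟩ := hK.ultrafilter_le_nhds (U.map fun n => T (w n)) hle
  have hyT : y = T w0 := by
    rw [NormedSpace.eq_iff_forall_dual_eq (𝕜 := ℝ)]
    intro g
    have h1 : Tendsto (fun n => g (T (w n))) U (𝓝 (g y)) := (g.continuous.tendsto y).comp hy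
    have h2 := hw0g (g.comp T)
    simp only [ContinuousLinearMap.comp_apply] at h2
    exact tendsto_nhds_unique h1 h2
  exact ⟨w0, hw01, hw0g, hyT ▸ hy⟩

lemma exists_exposed_norming (hrefl : Function.Surjective (inclusionInDoubleDual ℝ X))
    (hball : {x : X | ‖x‖ ≤ 1} = convexHull ℝ {x : X | ExposedPt x})
    {T : X →L[ℝ] Y} (hT : IsCompactOperator T) (hTpos : 0 < ‖T‖) :
    ∃ x : X, ExposedPt x ∧ ‖T x‖ = ‖T‖ := by
  -- any `c < ‖T‖` with `0 ≤ c` is beaten by some exposed point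
  have key : ∀ c : ℝ, 0 ≤ c → c < ‖T‖ → ∃ e : X, ExposedPt e ∧ c < ‖T e‖ := by
    intro c hc hclt
    by_contra h
    push_neg at h
    have hconv : Convex ℝ {w : X | ‖T w‖ ≤ c} := by
      intro a ha b hb p q hp hq hpq
      simp only [mem_setOf_eq] at ha hb ⊢
      have h1 : T (p • a + q • b) = p • T a + q • T b := by
        rw [map_add, map_smul, map_smul]
      rw [h1]
      calc ‖p • T a + q • T b‖ ≤ ‖p • T a‖ + ‖q • T b‖ := norm_add_le _ _
        _ = p * ‖T a‖ + q * ‖T b‖ := by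
            rw [norm_smul, norm_smul, Real.norm_eq_abs, Real.norm_eq_abs,
              abs_of_nonneg hp, abs_of_nonneg hq]
        _ ≤ p * c + q * c := by
            have := mul_le_mul_of_nonneg_left ha hp
            have := mul_le_mul_of_nonneg_left hb hq
            linarith
        _ = c := by nlinarith
    have hsub : {x : X | ‖x‖ ≤ 1} ⊆ {w : X | ‖T w‖ ≤ c} := by
      rw [hball]
      exact convexHull_min (fun e he => h e he) hconv
    have : ‖T‖ ≤ c := myOpNorm_le_of_unit hc fun w hw => hsub hw
    linarith
  -- choose a sequence of exposed points almost attaining the norm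
  have hseq : ∀ n : ℕ, ∃ e : X, ExposedPt e ∧ ‖T‖ * (1 - 1 / (n + 1)) < ‖T e‖ := by
    intro n
    refine key _ ?_ ?_
    · have h1 : (1 : ℝ) / (n + 1) ≤ 1 := by
        rw [div_le_one (by positivity)]; linarith [Nat.cast_nonneg (α := ℝ) n]
      nlinarith
    · have h1 : (0 : ℝ) < 1 / (n + 1) := by positivity
      nlinarith
  choose e he hne using hseq
  have he1 : ∀ n, ‖e n‖ ≤ 1 := fun n => (he n).1
  set U := Ultrafilter.of (atTop : Filter ℕ) with hU
  have hUle : (U : Filter ℕ) ≤ atTop := Ultrafilter.of_le _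
  obtain ⟨w0, hw01, _, hw0T⟩ := compact_limit hrefl hT U e he1
  -- ‖T (e n)‖ → ‖T‖
  have hupper : ∀ n, ‖T (e n)‖ ≤ ‖T‖ := by
    intro n
    calc ‖T (e n)‖ ≤ ‖T‖ * ‖e n‖ := T.le_opNorm _
      _ ≤ ‖T‖ * 1 := by gcongr; exact he1 n
      _ = ‖T‖ := mul_one _
  have hlow : Tendsto (fun n : ℕ => ‖T‖ * (1 - 1 / (n + 1))) atTop (𝓝 ‖T‖) := by
    have h1 : Tendsto (fun n : ℕ => 1 / ((n : ℝ) + 1)) atTop (𝓝 0) :=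
      tendsto_one_div_add_atTop_nhds_zero_nat
    have h2 := (tendsto_const_nhds (x := (1 : ℝ)) (f := atTop (α := ℕ))).sub h1
    have h3 := h2.const_mul ‖T‖
    simpa using h3
  have hnorm_tendsto : Tendsto (fun n => ‖T (e n)‖) atTop (𝓝 ‖T‖) := by
    refine tendsto_of_tendsto_of_tendsto_of_le_of_le hlow tendsto_const_nhds
      (fun n => (hne n).le) (fun n => hupper n)
  have hnorm_U : Tendsto (fun n => ‖T (e n)‖) U (𝓝 ‖T‖) := hnorm_tendsto.mono_left hUle
  have hnorm_U' : Tendsto (fun n => ‖T (e n)‖) U (𝓝 ‖T w0‖) := hw0T.norm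
  have hTw0 : ‖T w0‖ = ‖T‖ := tendsto_nhds_unique hnorm_U' hnorm_U
  -- now find a single exposed point attaining the norm
  by_contra h
  push_neg at h
  have hstrict : ∀ x : X, ExposedPt x → ‖T x‖ < ‖T‖ := by
    intro x hx
    have hle : ‖T x‖ ≤ ‖T‖ := by
      calc ‖T x‖ ≤ ‖T‖ * ‖x‖ := T.le_opNorm _
        _ ≤ ‖T‖ * 1 := by gcongr; exact hx.1
        _ = ‖T‖ := mul_one _
    exact lt_of_le_of_ne hle (h x hx)
  have hconv : Convex ℝ {w : X | ‖T w‖ < ‖T‖} := by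
    intro a ha b hb p q hp hq hpq
    simp only [mem_setOf_eq] at ha hb ⊢
    have h1 : T (p • a + q • b) = p • T a + q • T b := by
      rw [map_add, map_smul, map_smul]
    rw [h1]
    have h2 : ‖p • T a + q • T b‖ ≤ p * ‖T a‖ + q * ‖T b‖ := by
      calc ‖p • T a + q • T b‖ ≤ ‖p • T a‖ + ‖q • T b‖ := norm_add_le _ _
        _ = p * ‖T a‖ + q * ‖T b‖ := by
            rw [norm_smul, norm_smul, Real.norm_eq_abs, Real.norm_eq_abs,
              abs_of_nonneg hp, abs_of_nonneg hq]
    have h3 : p * ‖T a‖ + q * ‖T b‖ < ‖T‖ := by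
      have ha' := mul_le_mul_of_nonneg_left ha.le hp
      have hb' := mul_le_mul_of_nonneg_left hb.le hq
      rcases hp.lt_or_eq with hp' | hp'
      · have := mul_lt_mul_of_pos_left ha hp'
        nlinarith
      · have hq1 : q = 1 := by linarith
        rw [← hp', hq1]
        simpa using hb
    linarith
  have hsub : {x : X | ‖x‖ ≤ 1} ⊆ {w : X | ‖T w‖ < ‖T‖} := by
    rw [hball]
    exact convexHull_min (fun x hx => hstrict x hx) hconv
  have : ‖T w0‖ < ‖T‖ := hsub hw01
  rw [hTw0] at this
  exact lt_irrefl _ this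

lemma exposed_claim (hrefl : Function.Surjective (inclusionInDoubleDual ℝ X))
    {T : X →L[ℝ] Y} (hT : IsCompactOperator T) {x : X} {f : X →L[ℝ] ℝ}
    (hf1 : ‖f‖ = 1) (hfx : f x = 1) (hexp : ∀ u : X, ‖u‖ ≤ 1 → u ≠ x → f u < 1)
    {ε : ℝ} (hε : 0 < ε) :
    ∃ η : ℝ, 0 < η ∧ ∀ w : X, ‖w‖ ≤ 1 → 1 - η ≤ f w → ‖T w - T x‖ ≤ ε := by
  by_contra h
  push_neg at h
  have h' : ∀ n : ℕ, ∃ w : X, ‖w‖ ≤ 1 ∧ 1 - 1 / (n + 1) ≤ f w ∧ ε < ‖T w - T x‖ := by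
    intro n
    obtain ⟨w, hw1, hw2, hw3⟩ := h (1 / (n + 1)) (by positivity)
    exact ⟨w, hw1, hw2, hw3⟩
  choose w hw1 hw2 hw3 using h'
  set U := Ultrafilter.of (atTop : Filter ℕ) with hU
  have hUle : (U : Filter ℕ) ≤ atTop := Ultrafilter.of_le _
  obtain ⟨w0, hw01, hw0g, hw0T⟩ := compact_limit hrefl hT U w hw1
  have hupper : ∀ n, f (w n) ≤ 1 := by
    intro n
    have h1 : ‖f (w n)‖ ≤ ‖f‖ * ‖w n‖ := f.le_opNorm _
    rw [hf1, one_mul, Real.norm_eq_abs] at h1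
    have := le_abs_self (f (w n))
    linarith [hw1 n]
  have hlow : Tendsto (fun n : ℕ => 1 - 1 / ((n : ℝ) + 1)) atTop (𝓝 1) := by
    have h1 : Tendsto (fun n : ℕ => 1 / ((n : ℝ) + 1)) atTop (𝓝 0) :=
      tendsto_one_div_add_atTop_nhds_zero_nat
    simpa using (tendsto_const_nhds (x := (1 : ℝ)) (f := atTop (α := ℕ))).sub h1
  have hfw : Tendsto (fun n => f (w n)) atTop (𝓝 1) :=
    tendsto_of_tendsto_of_tendsto_of_le_of_le hlow tendsto_const_nhds hw2 hupper
  have hfw0 : f w0 = 1 := tendsto_nhds_unique (hw0g f) (hfw.mono_left hUle)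
  have hw0x : w0 = x := by
    by_contra hne
    exact absurd hfw0 (ne_of_lt (hexp w0 hw01 hne))
  have h5 : Tendsto (fun n => ‖T (w n) - T x‖) U (𝓝 ‖T w0 - T x‖) :=
    (hw0T.sub tendsto_const_nhds).norm
  rw [hw0x, sub_self, norm_zero] at h5
  have h6 : ε ≤ 0 := ge_of_tendsto h5 (Eventually.of_forall fun n => (hw3 n).le)
  linarith

end Helpers

theorem stmt1 {X Y : Type*} [NormedAddCommGroup X] [NormedSpace ℝ X] [CompleteSpace X]
    [NormedAddCommGroup Y] [NormedSpace ℝ Y] [CompleteSpace Y]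
    (hrefl : Function.Surjective (NormedSpace.inclusionInDoubleDual ℝ X))
    (hball : {x : X | ‖x‖ ≤ 1} = convexHull ℝ {x : X | ExposedPt x})
    (hY : ∀ y : Y, (∀ z : Y, BJOrth y z → BJOrth z y) → y = 0) :
    ∀ T : X →L[ℝ] Y, IsCompactOperator T →
      (∀ S : X →L[ℝ] Y, IsCompactOperator S → BJOrth T S → BJOrth S T) → T = 0 := by
  intro T hT hsym
  by_contra hT0
  have hTpos : 0 < ‖T‖ := by
    rcases (norm_nonneg T).lt_or_eq with h | h
    · exact h
    · exact absurd (norm_eq_zero.mp h.symm) hT0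
  obtain ⟨x, hxExp, hxnorm⟩ := exists_exposed_norming hrefl hball hT hTpos
  obtain ⟨hx1, f, hf1, hfx, hexp⟩ := hxExp
  have hTx0 : T x = 0 := by
    apply hY
    intro z hz
    by_cases hz0 : z = 0
    · subst hz0; intro t; simp
    have hzpos : 0 < ‖z‖ := norm_pos_iff.mpr hz0
    intro t0
    by_contra hlt
    push_neg at hlt
    have ht0 : t0 ≠ 0 := by
      rintro rfl
      simp at hlt
    have ht0pos : 0 < |t0| := abs_pos.mpr ht0
    set δ : ℝ := ‖z‖ - ‖z + t0 • T x‖ with hδdef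
    have hδ : 0 < δ := by simp only [hδdef]; linarith
    -- the rank-one operator S
    set S : X →L[ℝ] Y := f.smulRight z with hSdef
    have hSapp : ∀ w : X, S w = f w • z := fun w => rfl
    have hScomp : IsCompactOperator S := by
      refine ⟨(fun r : ℝ => r • z) '' Icc (-1) 1,
        isCompact_Icc.image (continuous_id.smul continuous_const), ?_⟩
      have h1 : f ⁻¹' Icc (-1) 1 ∈ 𝓝 (0 : X) := by
        refine f.continuous.continuousAt.preimage_mem_nhds ?_
        rw [map_zero]
        exact Icc_mem_nhds (by norm_num) (by norm_num)
      filter_upwards [h1] with u hu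
      exact ⟨f u, hu, rfl⟩
    -- T ⊥_B S
    have hTS : BJOrth T S := by
      intro t
      have h1 : (T + t • S) x = T x + t • z := by
        simp [hSapp, hfx, ContinuousLinearMap.add_apply, ContinuousLinearMap.smul_apply]
      calc ‖T‖ = ‖T x‖ := hxnorm.symm
        _ ≤ ‖T x + t • z‖ := hz t
        _ = ‖(T + t • S) x‖ := by rw [h1]
        _ ≤ ‖T + t • S‖ * ‖x‖ := (T + t • S).le_opNorm x
        _ ≤ ‖T + t • S‖ * 1 := by gcongr
        _ = ‖T + t • S‖ := mul_one _
    have hST : BJOrth S T := hsym S hScomp hTS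
    have hzS : ‖z‖ ≤ ‖S‖ := by
      have h1 : ‖S x‖ = ‖z‖ := by rw [hSapp, hfx, one_smul]
      calc ‖z‖ = ‖S x‖ := h1.symm
        _ ≤ ‖S‖ * ‖x‖ := S.le_opNorm x
        _ ≤ ‖S‖ * 1 := by gcongr
        _ = ‖S‖ := mul_one _
    -- segment bound
    have hseg : ∀ s : ℝ, 0 ≤ s → s ≤ 1 → ‖z + (s * t0) • T x‖ ≤ ‖z‖ - s * δ := by
      intro s hs0 hs1
      have h1 : z + (s * t0) • T x = (1 - s) • z + s • (z + t0 • T x) := by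
        rw [smul_add, smul_smul, sub_smul, one_smul]
        abel
      rw [h1]
      calc ‖(1 - s) • z + s • (z + t0 • T x)‖
          ≤ ‖(1 - s) • z‖ + ‖s • (z + t0 • T x)‖ := norm_add_le _ _
        _ = (1 - s) * ‖z‖ + s * ‖z + t0 • T x‖ := by
            rw [norm_smul, norm_smul, Real.norm_eq_abs, Real.norm_eq_abs,
              abs_of_nonneg hs0, abs_of_nonneg (by linarith : (0:ℝ) ≤ 1 - s)]
        _ = ‖z‖ - s * δ := by simp only [hδdef]; ring
    -- get η from the claim
    set ε : ℝ := δ / (4 * |t0|) with hεdef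
    have hε : 0 < ε := by positivity
    obtain ⟨η₀, hη₀, hclaim₀⟩ := exposed_claim hrefl hT hf1 hfx hexp hε
    set η : ℝ := min η₀ (1 / 2) with hηdef
    have hη : 0 < η := lt_min hη₀ (by norm_num)
    have hη2 : η ≤ 1 / 2 := min_le_right _ _
    have hclaim : ∀ w : X, ‖w‖ ≤ 1 → 1 - η ≤ f w → ‖T w - T x‖ ≤ ε := by
      intro w hw hfw
      refine hclaim₀ w hw ?_
      have := min_le_left η₀ (1/2 : ℝ)
      linarith
    -- the scalar s and perturbation t
    set s : ℝ := min (1 / 2) (η * ‖z‖ / (2 * |t0| * (‖T‖ + 1))) with hsdef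
    have hs0 : 0 < s := lt_min (by norm_num) (by positivity)
    have hs12 : s ≤ 1 / 2 := min_le_left _ _
    have hsB : s ≤ η * ‖z‖ / (2 * |t0| * (‖T‖ + 1)) := min_le_right _ _
    set t : ℝ := s * t0 with htdef
    have hts : |t| = s * |t0| := by
      rw [htdef, abs_mul, abs_of_pos hs0]
    -- case 1 bound
    have case1 : ∀ w : X, ‖w‖ ≤ 1 → 1 - η ≤ f w →
        ‖f w • z + t • T w‖ ≤ ‖z‖ - s * δ / 4 := by
      intro w hw hfw
      have ha12 : (1 : ℝ) / 2 ≤ f w := by linarith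
      have hapos : 0 < f w := by linarith
      have ha1 : f w ≤ 1 := by
        have h1 : ‖f w‖ ≤ ‖f‖ * ‖w‖ := f.le_opNorm _
        rw [hf1, one_mul, Real.norm_eq_abs] at h1
        linarith [le_abs_self (f w), hw]
      have e1 : f w * (s / f w * t0) = t := by
        rw [htdef]; field_simp
      have key : f w • z + t • T w
          = f w • (z + (s / f w * t0) • T x) + t • (T w - T x) := by
        rw [smul_add, smul_smul, e1, smul_sub]
        abel
      have hsa0 : 0 ≤ s / f w := le_of_lt (div_pos hs0 hapos)
      have hsa1 : s / f w ≤ 1 := by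
        rw [div_le_one hapos]; linarith
      have hTwx : ‖T w - T x‖ ≤ ε := hclaim w hw hfw
      calc ‖f w • z + t • T w‖
          = ‖f w • (z + (s / f w * t0) • T x) + t • (T w - T x)‖ := by rw [key]
        _ ≤ ‖f w • (z + (s / f w * t0) • T x)‖ + ‖t • (T w - T x)‖ := norm_add_le _ _
        _ = f w * ‖z + (s / f w * t0) • T x‖ + |t| * ‖T w - T x‖ := by
            rw [norm_smul, norm_smul, Real.norm_eq_abs, Real.norm_eq_abs,
              abs_of_pos hapos]
        _ ≤ f w * (‖z‖ - (s / f w) * δ) + (s * |t0|) * ε := by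
            rw [hts]
            have hfw0 : 0 ≤ f w := hapos.le
            have hseg' := hseg _ hsa0 hsa1
            gcongr
        _ = f w * ‖z‖ - s * δ + s * |t0| * ε := by
            have e3 : f w * (s / f w) = s := by
              field_simp
            rw [mul_sub, ← mul_assoc, e3]
        _ ≤ ‖z‖ - s * δ + s * (δ / 4) := by
            have h2 : f w * ‖z‖ ≤ 1 * ‖z‖ :=
              mul_le_mul_of_nonneg_right ha1 (norm_nonneg z)
            have h3 : s * |t0| * ε = s * (δ / 4) := by
              rw [hεdef]; field_simp
            rw [h3]
            linarith
        _ ≤ ‖z‖ - s * δ / 4 := by nlinarith [mul_pos hs0 hδ]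
    -- global bound
    set c : ℝ := min (s * δ / 4) (η * ‖z‖ / 2) with hcdef
    have hc : 0 < c := lt_min (by positivity) (by positivity)
    have hbound : ∀ w : X, ‖w‖ ≤ 1 → ‖(S + t • T) w‖ ≤ ‖z‖ - c := by
      intro w hw
      have happ : (S + t • T) w = f w • z + t • T w := by
        simp [hSapp, ContinuousLinearMap.add_apply, ContinuousLinearMap.smul_apply]
      rw [happ]
      rcases le_or_gt (1 - η) (f w) with h1 | h1
      · have := case1 w hw h1
        have hcle : c ≤ s * δ / 4 := min_le_left _ _
        linarith
      rcases le_or_gt (f w) (-(1 - η)) with h2 | h2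
      · have hneg : ‖f w • z + t • T w‖ = ‖f (-w) • z + t • T (-w)‖ := by
          rw [map_neg, map_neg, neg_smul, smul_neg, ← neg_add, norm_neg]
        rw [hneg]
        have := case1 (-w) (by simpa using hw) (by rw [map_neg]; linarith)
        have hcle : c ≤ s * δ / 4 := min_le_left _ _
        linarith
      · -- |f w| ≤ 1 - η
        have habs : |f w| ≤ 1 - η := abs_le.mpr ⟨by linarith, by linarith⟩
        have hTw : ‖T w‖ ≤ ‖T‖ := by
          calc ‖T w‖ ≤ ‖T‖ * ‖w‖ := T.le_opNorm _
            _ ≤ ‖T‖ * 1 := by gcongr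
            _ = ‖T‖ := mul_one _
        have hsmall : s * |t0| * ‖T‖ ≤ η * ‖z‖ / 2 := by
          have hpos : 0 < 2 * |t0| * (‖T‖ + 1) := by positivity
          have h3 : s * (2 * |t0| * (‖T‖ + 1)) ≤ η * ‖z‖ := by
            have := mul_le_mul_of_nonneg_right hsB hpos.le
            rwa [div_mul_cancel₀ _ hpos.ne'] at this
          nlinarith [abs_nonneg t0, norm_nonneg T, hs0.le]
        calc ‖f w • z + t • T w‖ ≤ ‖f w • z‖ + ‖t • T w‖ := norm_add_le _ _
          _ = |f w| * ‖z‖ + |t| * ‖T w‖ := by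
              rw [norm_smul, norm_smul, Real.norm_eq_abs, Real.norm_eq_abs]
          _ ≤ (1 - η) * ‖z‖ + s * |t0| * ‖T‖ := by
              rw [hts]
              gcongr
          _ ≤ ‖z‖ - η * ‖z‖ / 2 := by nlinarith [hsmall]
          _ ≤ ‖z‖ - c := by
              have := min_le_right (s * δ / 4) (η * ‖z‖ / 2)
              simp only [hcdef]
              linarith
    have hzc : 0 ≤ ‖z‖ - c := by
      have h1 : c ≤ η * ‖z‖ / 2 := min_le_right _ _
      nlinarith
    have hopn : ‖S + t • T‖ ≤ ‖z‖ - c := myOpNorm_le_of_unit hzc hbound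
    have := hST t
    linarith
  rw [hTx0, norm_zero] at hxnorm
  linarith
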